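/- Define G_n^m = ∫_{−1}^{1} (1 − x²)^{(m−1)/2} P_n^m(x) dx and H_n^m = ∫_{−1}^{1} x (1 − x²)^{(m−1)/2} P_n^m(x) dx for integers 0 ≤ m ≤ n. Then for all integers 0 ≤ m ≤ n − 1: H_n^m = ((m+n)/(m+n+1)) · G_{n−1}^m. -/

import Mathlib

open MeasureTheory

/-- The Legendre polynomial via the Rodrigues formula
`P_n(x) = (1/(2^n n!)) dⁿ/dxⁿ (x² − 1)ⁿ`. -/
noncomputable def legendreP (n : ℕ) (x : ℝ) : ℝ :=
  (1 / ((2 : ℝ) ^ n * Nat.factorial n)) * iteratedDeriv n (fun y : ℝ => (y ^ 2 - 1) ^ n) x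

/-- The associated Legendre function on `(−1,1)`:
`P_n^m(x) = (−1)^m (1 − x²)^{m/2} dᵐ/dxᵐ P_n(x)`. -/
noncomputable def assocLegendreP (n m : ℕ) (x : ℝ) : ℝ :=
  (-1 : ℝ) ^ m * (1 - x ^ 2) ^ ((m : ℝ) / 2) * iteratedDeriv m (legendreP n) x

/-- `G_n^m = ∫_{−1}^{1} (1 − x²)^{(m−1)/2} P_n^m(x) dx`. -/
noncomputable def Gint (n m : ℕ) : ℝ :=
  ∫ x in (-1 : ℝ)..1, (1 - x ^ 2) ^ (((m : ℝ) - 1) / 2) * assocLegendreP n m x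

/-- `H_n^m = ∫_{−1}^{1} x (1 − x²)^{(m−1)/2} P_n^m(x) dx`. -/
noncomputable def Hint (n m : ℕ) : ℝ :=
  ∫ x in (-1 : ℝ)..1, x * (1 - x ^ 2) ^ (((m : ℝ) - 1) / 2) * assocLegendreP n m x

open Polynomial

noncomputable def Upoly (k : ℕ) : ℝ[X] := (X ^ 2 - 1) ^ k

noncomputable def LPc (n : ℕ) : ℝ := 1 / ((2 : ℝ) ^ n * Nat.factorial n)

noncomputable def LPpoly (n : ℕ) : ℝ[X] := C (LPc n) * derivative^[n] (Upoly n)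

lemma iteratedDeriv_polyEval (p : ℝ[X]) : ∀ k, iteratedDeriv k (fun x => p.eval x)
    = fun x => (derivative^[k] p).eval x := by
  intro k
  induction k with
  | zero => simp [iteratedDeriv_zero]
  | succ k ih =>
    rw [iteratedDeriv_succ, ih, Function.iterate_succ_apply']
    funext x
    exact Polynomial.deriv (p := derivative^[k] p)

lemma legendreP_eval (n : ℕ) : legendreP n = fun x => (LPpoly n).eval x := by
  funext x
  have h : (fun y : ℝ => (y ^ 2 - 1) ^ n) = fun y => (Upoly n).eval y := by
    funext y; simp [Upoly]
  rw [legendreP, h, iteratedDeriv_polyEval]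
  simp [LPpoly, LPc]

lemma iteratedDeriv_legendreP (n m : ℕ) :
    iteratedDeriv m (legendreP n) = fun x => (derivative^[m] (LPpoly n)).eval x := by
  rw [legendreP_eval, iteratedDeriv_polyEval]


lemma itd (j : ℕ) (p : ℝ[X]) : derivative^[j + 1] p = derivative (derivative^[j] p) :=
  Function.iterate_succ_apply' _ _ _

lemma L1 (p : ℝ[X]) : ∀ k : ℕ, derivative^[k + 1] (X * p)
    = X * derivative^[k + 1] p + C ((k : ℝ) + 1) * derivative^[k] p := by
  intro k
  induction k with
  | zero =>
    show derivative (X * p) = _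
    simp only [derivative_mul, derivative_X, one_mul, Nat.cast_zero, zero_add, map_one,
      Function.iterate_zero, id_eq, Function.iterate_one]
    ring
  | succ k ih =>
    rw [Function.iterate_succ_apply' derivative (k + 1) (X * p), ih, derivative_add,
      derivative_mul, derivative_mul, derivative_X, derivative_C,
      Function.iterate_succ_apply' derivative (k + 1) p,
      Function.iterate_succ_apply' derivative k p]
    push_cast
    simp only [map_add, map_one]
    ring

lemma L2 (p : ℝ[X]) : ∀ k : ℕ, derivative^[k + 2] ((X ^ 2 - 1) * p)
    = (X ^ 2 - 1) * derivative^[k + 2] p + C (2 * ((k : ℝ) + 2)) * (X * derivative^[k + 1] p)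
      + C (((k : ℝ) + 2) * ((k : ℝ) + 1)) * derivative^[k] p := by
  intro k
  induction k with
  | zero =>
    have h2 : ∀ q : ℝ[X], derivative^[0 + 2] q = derivative (derivative q) := fun _ => rfl
    rw [h2, h2]
    simp only [derivative_mul, derivative_add, derivative_sub, derivative_one, derivative_pow,
      derivative_X, derivative_ofNat, Nat.cast_ofNat, Nat.cast_zero, zero_add, map_one, map_ofNat,
      map_add, map_mul, mul_one, one_mul, pow_one, sub_zero, zero_mul, mul_zero, add_zero,
      Function.iterate_zero, id_eq, Function.iterate_one, Nat.cast_one, C_1]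
    norm_num
    ring
  | succ k ih =>
    have hidx : k + 1 + 2 = k + 2 + 1 := by omega
    rw [hidx, Function.iterate_succ_apply' derivative (k + 2) ((X ^ 2 - 1) * p), ih,
      derivative_add, derivative_add, derivative_mul, derivative_mul, derivative_mul,
      derivative_mul, derivative_C, derivative_C,
      Function.iterate_succ_apply' derivative (k + 2) p,
      Function.iterate_succ_apply' derivative (k + 1) p,
      Function.iterate_succ_apply' derivative k p]
    simp only [derivative_sub, derivative_one, derivative_pow, derivative_X, derivative_mul,
      Nat.cast_ofNat, map_one, mul_one, one_mul, pow_one, sub_zero, zero_mul, mul_zero, add_zero,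
      zero_add]
    push_cast
    simp only [map_add, map_mul, map_one, map_ofNat]
    ring

lemma derU (k : ℕ) : derivative (Upoly (k + 1)) = C (2 * ((k : ℝ) + 1)) * (X * Upoly k) := by
  rw [Upoly, Upoly, derivative_pow]
  simp only [Nat.add_sub_cancel, derivative_sub, derivative_one, derivative_pow, derivative_X,
    Nat.cast_ofNat, pow_one, mul_one, sub_zero, Nat.cast_add, Nat.cast_one]
  push_cast
  simp only [map_add, map_mul, map_one, map_ofNat]
  ring

lemma baseG (k : ℕ) : (X ^ 2 - 1) * derivative (Upoly k) = C (2 * (k : ℝ)) * (X * Upoly k) := by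
  cases k with
  | zero => simp [Upoly]
  | succ k =>
    rw [derU]
    have h : (X ^ 2 - 1) * (X * Upoly k) = X * Upoly (k + 1) := by
      rw [Upoly, Upoly, pow_succ]; ring
    calc (X ^ 2 - 1) * (C (2 * ((k : ℝ) + 1)) * (X * Upoly k))
        = C (2 * ((k : ℝ) + 1)) * ((X ^ 2 - 1) * (X * Upoly k)) := by ring
      _ = C (2 * ((k : ℝ) + 1)) * (X * Upoly (k + 1)) := by rw [h]
      _ = C (2 * ((k + 1 : ℕ) : ℝ)) * (X * Upoly (k + 1)) := by push_cast; ring_nf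

lemma lemG (k : ℕ) : ∀ j : ℕ, (X ^ 2 - 1) * derivative^[j + 2] (Upoly k)
    = C (2 * ((k : ℝ) - ((j : ℝ) + 1))) * (X * derivative^[j + 1] (Upoly k))
      + C (((j : ℝ) + 1) * (2 * (k : ℝ) - (j : ℝ))) * derivative^[j] (Upoly k) := by
  intro j
  induction j with
  | zero =>
    have hd := congrArg derivative (baseG k)
    simp only [derivative_mul, derivative_add, derivative_sub, derivative_one, derivative_pow,
      derivative_X, derivative_C, Nat.cast_ofNat, pow_one, mul_one, sub_zero, zero_mul, zero_add,
      one_mul] at hd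
    rw [show (0 : ℕ) + 2 = 0 + 1 + 1 from rfl]
    simp only [itd, Function.iterate_zero, id_eq, Nat.cast_zero]
    simp only [map_add, map_mul, map_one, map_ofNat, map_sub, map_zero, Nat.cast_zero] at hd ⊢
    linear_combination hd
  | succ j ih =>
    rw [show j + 2 = j + 1 + 1 from rfl] at ih
    simp only [itd] at ih
    have hd := congrArg derivative ih
    simp only [derivative_mul, derivative_add, derivative_sub, derivative_one, derivative_pow,
      derivative_X, derivative_C, Nat.cast_ofNat, pow_one, mul_one, sub_zero, zero_mul, zero_add,
      one_mul] at hd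
    rw [show j + 1 + 2 = j + 1 + 1 + 1 from rfl]
    simp only [itd]
    push_cast at hd ⊢
    simp only [map_add, map_mul, map_one, map_ofNat, map_sub, map_zero] at hd ⊢
    linear_combination hd

lemma lemC (j : ℕ) : (X ^ 2 - 1) * derivative^[j + 2] (Upoly (j + 1))
    = C (((j : ℝ) + 1) * ((j : ℝ) + 2)) * derivative^[j] (Upoly (j + 1)) := by
  have h := lemG (j + 1) j
  rw [show j + 2 = j + 1 + 1 from rfl] at h ⊢
  simp only [itd] at h ⊢
  push_cast at h
  simp only [map_add, map_mul, map_one, map_ofNat, map_sub, map_zero] at h ⊢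
  linear_combination h

lemma derLP (n : ℕ) : derivative (LPpoly n) = C (LPc n) * derivative^[n + 1] (Upoly n) := by
  rw [LPpoly, derivative_C_mul, itd]

lemma cfac (k : ℕ) : LPc k = 2 * ((k : ℝ) + 1) * LPc (k + 1) := by
  rw [LPc, LPc, pow_succ, Nat.factorial_succ]
  have h1 : ((2 : ℝ) ^ k) ≠ 0 := by positivity
  have h2 : ((k.factorial : ℝ)) ≠ 0 := by positivity
  field_simp
  push_cast
  ring

lemma Ccfac (k : ℕ) : C (LPc k) = C (2 * ((k : ℝ) + 1)) * C (LPc (k + 1)) := by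
  rw [← C_mul, ← cfac]

lemma derLPsucc (k : ℕ) : derivative (LPpoly (k + 1))
    = C (LPc k) * (X * derivative^[k + 1] (Upoly k) + C ((k : ℝ) + 1) * derivative^[k] (Upoly k)) := by
  rw [derLP, Function.iterate_succ_apply derivative (k + 1) (Upoly (k + 1)), derU,
    iterate_derivative_C_mul, L1]
  linear_combination (-(X * derivative^[k + 1] (Upoly k) + C ((k : ℝ) + 1) * derivative^[k] (Upoly k))) * (Ccfac k)

lemma recIII (k : ℕ) : derivative (LPpoly (k + 1))
    = X * derivative (LPpoly k) + C ((k : ℝ) + 1) * LPpoly k := by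
  rw [derLPsucc, derLP, LPpoly]
  ring

lemma recII0 (k : ℕ) : X * derivative (LPpoly (k + 1))
    = derivative (LPpoly k) + C ((k : ℝ) + 1) * LPpoly (k + 1) := by
  cases k with
  | zero =>
    simp only [LPpoly, LPc, Upoly, pow_one, pow_zero, Nat.factorial, Nat.cast_zero, Nat.cast_one,
      Function.iterate_zero, Function.iterate_one, id_eq]
    norm_num [derivative_sub, derivative_one, derivative_pow]
    ring
  | succ j =>
    have e1 := derLPsucc (j + 1)
    have e2 := derLP (j + 1)
    have hU : Upoly (j + 2) = (X ^ 2 - 1) * Upoly (j + 1) := by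
      rw [Upoly, Upoly, pow_succ]; ring
    have e3 : LPpoly (j + 2) = C (LPc (j + 2)) * derivative^[j + 2] ((X ^ 2 - 1) * Upoly (j + 1)) := by
      rw [LPpoly, hU]
    have e4 := L2 (Upoly (j + 1)) j
    have e5 := lemC j
    have hc := Ccfac (j + 1)
    rw [show j + 2 = j + 1 + 1 from rfl] at e1 e2 e3 e4 e5 ⊢
    simp only [itd] at e1 e2 e3 e4 e5 ⊢
    push_cast at e1 e2 e3 e4 e5 hc ⊢
    simp only [map_add, map_mul, map_one, map_ofNat, map_sub, map_zero] at e1 e2 e3 e4 e5 hc ⊢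
    linear_combination X * e1 - e2 - (C ((j : ℝ)) + 2) * e3
      - ((C ((j : ℝ)) + 2) * C (LPc (j + 1 + 1))) * e4
      + ((C ((j : ℝ)) + 2) * C (LPc (j + 1 + 1))) * e5
      + (X ^ 2 * derivative (derivative (derivative^[j] (Upoly (j + 1))))
         - derivative (derivative (derivative^[j] (Upoly (j + 1))))
         + (C ((j : ℝ)) + 2) * X * derivative (derivative^[j] (Upoly (j + 1)))) * hc

lemma recI0 (k : ℕ) : (1 - X ^ 2) * derivative (LPpoly (k + 1))
    = C ((k : ℝ) + 1) * LPpoly k - C ((k : ℝ) + 1) * (X * LPpoly (k + 1)) := by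
  linear_combination recIII k - X * recII0 k

lemma recIIm (k : ℕ) : ∀ m : ℕ, X * derivative^[m + 1] (LPpoly (k + 1))
    = derivative^[m + 1] (LPpoly k) + C ((k : ℝ) + 1 - (m : ℝ)) * derivative^[m] (LPpoly (k + 1)) := by
  intro m
  induction m with
  | zero =>
    simp only [Function.iterate_one, Function.iterate_zero, id_eq, Nat.cast_zero, sub_zero]
    exact recII0 k
  | succ m ih =>
    have hd := congrArg derivative ih
    simp only [itd] at hd ⊢
    simp only [derivative_add, derivative_mul, derivative_C, derivative_X, one_mul, zero_mul,
      zero_add] at hd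
    push_cast at hd ⊢
    simp only [map_add, map_mul, map_one, map_ofNat, map_sub, map_zero] at hd ⊢
    linear_combination hd

lemma recIm (k : ℕ) : ∀ m : ℕ, (1 - X ^ 2) * derivative^[m + 1] (LPpoly (k + 1))
    = C ((k : ℝ) + 1 + (m : ℝ)) * derivative^[m] (LPpoly k)
      - C ((k : ℝ) + 1 - (m : ℝ)) * (X * derivative^[m] (LPpoly (k + 1))) := by
  intro m
  induction m with
  | zero =>
    simp only [Function.iterate_one, Function.iterate_zero, id_eq, Nat.cast_zero, sub_zero,
      add_zero]
    exact recI0 k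
  | succ m ih =>
    have hd := congrArg derivative ih
    have h2 := recIIm k m
    simp only [itd] at hd h2 ⊢
    simp only [derivative_add, derivative_sub, derivative_mul, derivative_C, derivative_X,
      derivative_one, derivative_pow, one_mul, zero_mul, zero_add, mul_one, pow_one, zero_sub,
      Nat.cast_ofNat, mul_zero, sub_zero] at hd
    norm_num at hd
    push_cast at hd h2 ⊢
    simp only [map_add, map_mul, map_one, map_ofNat, map_sub, map_zero, C_eq_natCast]
      at hd h2 ⊢
    linear_combination hd + h2

lemma integ (mu : ℝ) (hmu : -1 < mu) (r : ℝ[X]) :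
    IntervalIntegrable (fun x => (1 - x ^ 2) ^ mu * r.eval x) volume (-1) 1 := by
  have key : ∀ (sing cont : ℝ → ℝ) (a b : ℝ), a ≤ b →
      IntervalIntegrable sing volume a b → ContinuousOn cont (Set.Icc a b) →
      (∀ x ∈ Set.Ioc a b, (1 - x ^ 2) ^ mu * r.eval x = sing x * cont x) →
      IntervalIntegrable (fun x => (1 - x ^ 2) ^ mu * r.eval x) volume a b := by
    intro sing cont a b hab hs hc heq
    have h1 : IntervalIntegrable (fun x => sing x * cont x) volume a b := by
      apply hs.mul_continuousOn
      rwa [Set.uIcc_of_le hab]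
    rw [intervalIntegrable_iff_integrableOn_Ioc_of_le hab] at h1 ⊢
    exact h1.congr_fun (fun x hx => (heq x hx).symm) measurableSet_Ioc
  have h0 : IntervalIntegrable (fun x : ℝ => x ^ mu) volume 0 1 := intervalIntegral.intervalIntegrable_rpow' hmu
  have hL : IntervalIntegrable (fun x => (1 - x ^ 2) ^ mu * r.eval x) volume (-1) 0 := by
    have hs := h0.comp_add_right 1
    norm_num at hs
    refine key (fun x => (x + 1) ^ mu) (fun x => (1 - x) ^ mu * r.eval x) (-1) 0 (by norm_num)
      hs ?_ ?_
    · exact (((continuous_const.sub continuous_id).continuousOn).rpow_const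
        (fun x hx => Or.inl (by simp only [Set.mem_Icc] at hx; intro h; simp only [Pi.sub_apply, id_eq] at h; nlinarith))).mul
        r.continuous.continuousOn
    · intro x hx
      simp only [Set.mem_Ioc] at hx
      rw [show (1 : ℝ) - x ^ 2 = (x + 1) * (1 - x) by ring,
        Real.mul_rpow (by nlinarith) (by nlinarith)]
      ring
  have hR : IntervalIntegrable (fun x => (1 - x ^ 2) ^ mu * r.eval x) volume 0 1 := by
    have hs := h0.comp_sub_left 1
    norm_num at hs
    refine key (fun x => (1 - x) ^ mu) (fun x => (1 + x) ^ mu * r.eval x) 0 1 (by norm_num)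
      hs.symm ?_ ?_
    · exact (((continuous_const.add continuous_id).continuousOn).rpow_const
        (fun x hx => Or.inl (by simp only [Set.mem_Icc] at hx; intro h; simp only [Pi.add_apply, id_eq] at h; nlinarith))).mul
        r.continuous.continuousOn
    · intro x hx
      simp only [Set.mem_Ioc] at hx
      rw [show (1 : ℝ) - x ^ 2 = (1 - x) * (1 + x) by ring,
        Real.mul_rpow (by nlinarith) (by nlinarith)]
      ring
  exact hL.trans hR

theorem Hint_eq (m n : ℕ) (hmn : m + 1 ≤ n) :
    Hint n m = ((m : ℝ) + n) / ((m : ℝ) + n + 1) * Gint (n - 1) m := by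
  obtain ⟨k, rfl⟩ : ∃ k, n = k + 1 := ⟨n - 1, by omega⟩
  set p : ℝ[X] := derivative^[m] (LPpoly (k + 1)) with hp
  set q : ℝ[X] := derivative^[m] (LPpoly k) with hq
  set mu : ℝ := (m : ℝ) - 1 / 2 with hmu
  set a : ℝ := (k : ℝ) + 1 + m with ha
  set b : ℝ := (k : ℝ) + m + 2 with hb
  set s : ℝ[X] := C a * q - C b * (X * p) with hs
  have hmu1 : (-1 : ℝ) < mu := by
    have : (0 : ℝ) ≤ m := Nat.cast_nonneg m
    rw [hmu]; linarith
  have hmune : mu ≠ 0 := by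
    rcases Nat.eq_zero_or_pos m with h | h
    · rw [hmu, h]; norm_num
    · have : (1 : ℝ) ≤ m := by exact_mod_cast h
      rw [hmu]; intro hcon; linarith
  -- derivative of F
  have hF : ∀ x ∈ Set.Ioo (-1 : ℝ) 1, HasDerivAt
      (fun y => (1 - y ^ 2) ^ ((m : ℝ) + 1 / 2) * p.eval y)
      ((1 - x ^ 2) ^ mu * s.eval x) x := by
    intro x hx
    obtain ⟨hx1, hx2⟩ := hx
    have hpos : 0 < 1 - x ^ 2 := by nlinarith
    have h1 : HasDerivAt (fun y : ℝ => 1 - y ^ 2) (-(2 * x)) x := by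
      simpa using (hasDerivAt_pow 2 x).const_sub 1
    have h2 := h1.rpow_const (p := (m : ℝ) + 1 / 2) (Or.inl hpos.ne')
    have H := h2.mul (p.hasDerivAt x)
    convert H using 1
    on_goal 1 => rfl
    on_goal 1 => rfl
    on_goal 1 => rfl
    have hder : derivative p = derivative^[m + 1] (LPpoly (k + 1)) := (itd m _).symm
    have hId := congrArg (fun P : ℝ[X] => P.eval x) (recIm k m)
    simp only [eval_mul, eval_add, eval_sub, eval_one, eval_pow, eval_X, eval_C, ← hp, ← hq]
      at hId
    rw [hder]
    have e1 : (1 - x ^ 2) ^ ((m : ℝ) + 1 / 2 - 1) = (1 - x ^ 2) ^ mu := by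
      congr 1; rw [hmu]; ring
    have e2 : (1 - x ^ 2) ^ ((m : ℝ) + 1 / 2) = (1 - x ^ 2) ^ mu * (1 - x ^ 2) := by
      rw [show (m : ℝ) + 1 / 2 = mu + 1 by rw [hmu]; ring, Real.rpow_add hpos, Real.rpow_one]
    rw [e1, e2, hs]
    simp only [eval_mul, eval_add, eval_sub, eval_X, eval_C]
    linear_combination (-(1 - x ^ 2) ^ mu) * hId
  have hcontF : Continuous (fun y : ℝ => (1 - y ^ 2) ^ ((m : ℝ) + 1 / 2) * p.eval y) := by
    refine ((continuous_const.sub (continuous_pow 2)).rpow_const fun x => Or.inr ?_).mul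
      p.continuous
    positivity
  have hint : IntervalIntegrable (fun x => (1 - x ^ 2) ^ mu * s.eval x) volume (-1) 1 :=
    integ mu hmu1 s
  have hFTC : ∫ x in (-1 : ℝ)..1, (1 - x ^ 2) ^ mu * s.eval x = 0 := by
    have h := intervalIntegral.integral_eq_sub_of_hasDerivAt_of_tendsto (by norm_num) hF hint
      ((hcontF.tendsto (-1)).mono_left nhdsWithin_le_nhds)
      ((hcontF.tendsto 1).mono_left nhdsWithin_le_nhds)
    have hz : ((0 : ℝ)) ^ ((m : ℝ) + 1 / 2) = 0 := Real.zero_rpow (by positivity)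
    rw [h, show (1 : ℝ) - 1 ^ 2 = 0 by norm_num, show (1 : ℝ) - (-1 : ℝ) ^ 2 = 0 by norm_num, hz]
    ring
  have hq1 := integ mu hmu1 q
  have hp1 := integ mu hmu1 (X * p)
  have hsplit : ∫ x in (-1 : ℝ)..1, (1 - x ^ 2) ^ mu * s.eval x
      = a * (∫ x in (-1 : ℝ)..1, (1 - x ^ 2) ^ mu * q.eval x)
        - b * (∫ x in (-1 : ℝ)..1, (1 - x ^ 2) ^ mu * (X * p).eval x) := by
    rw [← intervalIntegral.integral_const_mul, ← intervalIntegral.integral_const_mul,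
      ← intervalIntegral.integral_sub (hq1.const_mul a) (hp1.const_mul b)]
    apply intervalIntegral.integral_congr
    intro x _
    simp only [hs, eval_mul, eval_add, eval_sub, eval_X, eval_C]
    ring
  have hrel : a * (∫ x in (-1 : ℝ)..1, (1 - x ^ 2) ^ mu * q.eval x)
      = b * (∫ x in (-1 : ℝ)..1, (1 - x ^ 2) ^ mu * (X * p).eval x) := by
    rw [hsplit] at hFTC; linarith
  -- rewrite Hint
  have hHint : Hint (k + 1) m
      = (-1 : ℝ) ^ m * ∫ x in (-1 : ℝ)..1, (1 - x ^ 2) ^ mu * (X * p).eval x := by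
    rw [Hint, ← intervalIntegral.integral_const_mul]
    apply intervalIntegral.integral_congr
    intro x hx
    rw [Set.uIcc_of_le (by norm_num : (-1 : ℝ) ≤ 1), Set.mem_Icc] at hx
    have hx2 : 0 ≤ 1 - x ^ 2 := by nlinarith [hx.1, hx.2]
    unfold assocLegendreP
    rw [iteratedDeriv_legendreP]
    simp only [← hp, eval_mul, eval_X]
    rcases eq_or_lt_of_le hx2 with h0 | hpos
    · rw [← h0]
      rcases Nat.eq_zero_or_pos m with hm | hm
      · subst hm
        rw [show ((0 : ℕ) : ℝ) - 1 = -1 by norm_num] 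
        rw [hmu]
        norm_num
      · have hmhalf : ((m : ℝ)) / 2 ≠ 0 := by
          have : (1 : ℝ) ≤ m := by exact_mod_cast hm
          positivity
        rw [Real.zero_rpow hmhalf, Real.zero_rpow hmune]
        ring
    · have hcomb : (1 - x ^ 2) ^ (((m : ℝ) - 1) / 2) * (1 - x ^ 2) ^ ((m : ℝ) / 2)
          = (1 - x ^ 2) ^ mu := by
        rw [← Real.rpow_add hpos]; congr 1; rw [hmu]; ring
      linear_combination ((-1 : ℝ) ^ m * (x * p.eval x)) * hcomb
  have hGint : Gint (k + 1 - 1) m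
      = (-1 : ℝ) ^ m * ∫ x in (-1 : ℝ)..1, (1 - x ^ 2) ^ mu * q.eval x := by
    rw [show k + 1 - 1 = k from rfl, Gint, ← intervalIntegral.integral_const_mul]
    apply intervalIntegral.integral_congr
    intro x hx
    rw [Set.uIcc_of_le (by norm_num : (-1 : ℝ) ≤ 1), Set.mem_Icc] at hx
    have hx2 : 0 ≤ 1 - x ^ 2 := by nlinarith [hx.1, hx.2]
    unfold assocLegendreP
    rw [iteratedDeriv_legendreP]
    simp only [← hq, eval_mul, eval_X]
    rcases eq_or_lt_of_le hx2 with h0 | hpos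
    · rw [← h0]
      rcases Nat.eq_zero_or_pos m with hm | hm
      · subst hm
        rw [show ((0 : ℕ) : ℝ) - 1 = -1 by norm_num]
        rw [hmu]
        norm_num
      · have hmhalf : ((m : ℝ)) / 2 ≠ 0 := by
          have : (1 : ℝ) ≤ m := by exact_mod_cast hm
          positivity
        rw [Real.zero_rpow hmhalf, Real.zero_rpow hmune]
        ring
    · have hcomb : (1 - x ^ 2) ^ (((m : ℝ) - 1) / 2) * (1 - x ^ 2) ^ ((m : ℝ) / 2)
          = (1 - x ^ 2) ^ mu := by
        rw [← Real.rpow_add hpos]; congr 1; rw [hmu]; ring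
      linear_combination ((-1 : ℝ) ^ m * q.eval x) * hcomb
  rw [hHint, hGint]
  have hcast : ((m : ℝ) + ((k : ℕ) + 1 : ℕ)) = a := by rw [ha]; push_cast; ring
  have hba : b = a + 1 := by rw [ha, hb]; ring
  have ha1 : a + 1 ≠ 0 := by rw [ha]; positivity
  rw [hba] at hrel
  rw [hcast, div_mul_eq_mul_div, eq_div_iff ha1]
  linear_combination (-(-1 : ℝ) ^ m) * hrel
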